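/- Let I be a squarefree monomial ideal in K[x_1,...,x_n] (n ≥ 2) with big height h ≥ 2 (i.e., every associated prime of I is generated by at most h variables, and some associated prime has exactly h generators). Then for all integers r ≥ n, the symbolic power I^{(rh - h)} is contained in I^r, where I^{(s)} = ⋂_{P ∈ Ass(I)} P^s is the intersection of the s-th powers of the minimal primes of I. -/

import Mathlib

open MvPolynomial Finset

namespace Stmt8Aux

variable {K : Type*} [Field K] {n : ℕ}

/-- The ideal of polynomials whose every monomial has `t`-degree at least `s`. -/
def J (t : Finset (Fin n)) (s : ℕ) : Ideal (MvPolynomial (Fin n) K) where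
  carrier := {f | ∀ m ∈ f.support, s ≤ ∑ j ∈ t, m j}
  zero_mem' := by simp
  add_mem' := by
    intro a b ha hb m hm
    rcases Finset.mem_union.mp (MvPolynomial.support_add hm) with h | h
    exacts [ha m h, hb m h]
  smul_mem' := by
    intro c f hf m hm
    rw [smul_eq_mul] at hm
    obtain ⟨m1, hm1, m2, hm2, rfl⟩ := Finset.mem_add.mp (MvPolynomial.support_mul c f hm)
    calc s ≤ ∑ j ∈ t, m2 j := hf m2 hm2
      _ ≤ ∑ j ∈ t, (m1 + m2) j := Finset.sum_le_sum fun j _ => by simp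

lemma mul_mem_J {t : Finset (Fin n)} {a b : ℕ} {f g : MvPolynomial (Fin n) K}
    (hf : f ∈ J t a) (hg : g ∈ J t b) : f * g ∈ J (K := K) t (a + b) := by
  intro m hm
  obtain ⟨m1, hm1, m2, hm2, rfl⟩ := Finset.mem_add.mp (MvPolynomial.support_mul f g hm)
  have h1 := hf m1 hm1
  have h2 := hg m2 hm2
  calc a + b ≤ (∑ j ∈ t, m1 j) + ∑ j ∈ t, m2 j := Nat.add_le_add h1 h2
    _ = ∑ j ∈ t, (m1 + m2) j := (Finset.sum_add_distrib).symm

lemma pow_le_J (t : Finset (Fin n)) (s : ℕ) :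
    (Ideal.span ((fun j => (MvPolynomial.X j : MvPolynomial (Fin n) K)) ''
      (t : Set (Fin n)))) ^ s ≤ J t s := by
  induction s with
  | zero => intro f _; simp [J]
  | succ s ih =>
    rw [pow_succ]
    apply Ideal.mul_le.mpr
    intro f hf g hg
    have hspan : Ideal.span ((fun j => (MvPolynomial.X j : MvPolynomial (Fin n) K)) ''
        (t : Set (Fin n))) ≤ J t 1 := by
      rw [Ideal.span_le]
      rintro g ⟨j, hj, rfl⟩ m hm
      rw [MvPolynomial.support_X, Finset.mem_singleton] at hm
      subst hm
      rw [Finset.mem_coe] at hj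
      have : ∑ i ∈ t, (Finsupp.single j 1 : Fin n →₀ ℕ) i = 1 := by
        simp only [Finsupp.single_apply, Finset.sum_ite_eq, if_pos hj]
      omega
    exact mul_mem_J (ih hf) (hspan hg)

lemma prod_monomial (s : Finset ℕ) (d : ℕ → (Fin n →₀ ℕ)) :
    (∏ k ∈ s, (monomial (d k) (1 : K))) = monomial (∑ k ∈ s, d k) 1 := by
  induction s using Finset.induction with
  | empty => simp
  | insert _ _ hx ih =>
    rw [Finset.prod_insert hx, Finset.sum_insert hx, ih, monomial_mul, one_mul]

lemma prod_mem_pow {R : Type*} [CommRing R] (I : Ideal R) (g : ℕ → R) (r : ℕ)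
    (hg : ∀ k < r, g k ∈ I) : (∏ k ∈ Finset.range r, g k) ∈ I ^ r := by
  induction r with
  | zero => simp
  | succ r ih =>
    rw [Finset.prod_range_succ, pow_succ]
    exact Ideal.mul_mem_mul (ih fun k hk => hg k (hk.trans (Nat.lt_succ_self r)))
      (hg r (Nat.lt_succ_self r))

/-- Key combinatorial lemma. -/
lemma key {p : ℕ} (h : ℕ) (hh : 2 ≤ h) (T : Fin p → Finset (Fin n))
    (hT : ∀ i, (T i).card ≤ h) (r : ℕ) (hr : n ≤ r) (hr2 : 2 ≤ r)
    (m : Fin n →₀ ℕ) (hm : ∀ i, (r - 1) * h ≤ ∑ j ∈ T i, m j) :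
    (monomial m (1 : K)) ∈
      (⨅ i : Fin p, Ideal.span ((fun j => (MvPolynomial.X j : MvPolynomial (Fin n) K)) ''
          (T i : Set (Fin n)))) ^ r := by
  classical
  set S : ℕ → Finset (Fin n) :=
    fun k => Finset.univ.filter (fun j => r ≤ m j ∨ (m j = r - 1 ∧ (j : ℕ) ≠ k)) with hS
  set c : ℕ → (Fin n →₀ ℕ) := fun k => ∑ j ∈ S k, Finsupp.single j 1 with hc
  have hcapp : ∀ k j, c k j = if j ∈ S k then 1 else 0 := by
    intro k j
    rw [hc, Finsupp.finset_sum_apply]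
    simp only [Finsupp.single_apply]
    rw [Finset.sum_ite_eq' (S k) j (fun _ => 1)]
  set b : Fin n →₀ ℕ := ∑ k ∈ Finset.range r, c k with hb
  have hbapp : ∀ j, b j = ∑ k ∈ Finset.range r, (if j ∈ S k then 1 else 0) := by
    intro j
    rw [hb, Finsupp.finset_sum_apply]
    exact Finset.sum_congr rfl fun k _ => hcapp k j
  -- b ≤ m
  have hbm : b ≤ m := by
    intro j
    rw [hbapp j]
    rcases le_or_gt r (m j) with hj | hj
    · calc (∑ k ∈ Finset.range r, if j ∈ S k then 1 else 0)
          ≤ ∑ k ∈ Finset.range r, 1 := Finset.sum_le_sum (fun k _ => by split <;> omega)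
        _ = r := by simp
        _ ≤ m j := hj
    rcases eq_or_lt_of_le (Nat.le_of_lt_succ (by omega : m j < (r - 1) + 1)) with hj1 | hj1
    · -- m j = r - 1
      have hjr : (j : ℕ) ∈ Finset.range r := Finset.mem_range.mpr (lt_of_lt_of_le j.2 hr)
      rw [← Finset.sum_erase_add _ _ hjr]
      have h0 : (if j ∈ S (j : ℕ) then 1 else 0) = 0 := by
        rw [if_neg]
        rw [hS]
        simp only [Finset.mem_filter, Finset.mem_univ, true_and]
        push_neg
        exact ⟨by omega, fun _ => by simp⟩
      rw [h0, add_zero]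
      calc (∑ k ∈ (Finset.range r).erase (j : ℕ), if j ∈ S k then 1 else 0)
          ≤ ∑ k ∈ (Finset.range r).erase (j : ℕ), 1 :=
            Finset.sum_le_sum (fun k _ => by split <;> omega)
        _ = r - 1 := by rw [Finset.sum_const, smul_eq_mul, mul_one,
            Finset.card_erase_of_mem hjr, Finset.card_range]
        _ = m j := hj1.symm
    · -- m j < r - 1 : j in no S k
      have hnot : ∀ k, j ∉ S k := by
        intro k
        rw [hS]
        simp only [Finset.mem_filter, Finset.mem_univ, true_and]
        push_neg
        exact ⟨by omega, fun h' => absurd h' (by omega)⟩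
      have hz : (∑ k ∈ Finset.range r, if j ∈ S k then 1 else 0) = 0 :=
        Finset.sum_eq_zero fun k _ => if_neg (hnot k)
      omega
  -- each S k meets each T i
  have hSi : ∀ (i : Fin p) (k : ℕ), ∃ j ∈ T i, j ∈ S k := by
    intro i k
    by_cases hcase : ∃ j ∈ T i, r ≤ m j
    · obtain ⟨j, hj, hjm⟩ := hcase
      refine ⟨j, hj, ?_⟩
      rw [hS]
      simp only [Finset.mem_filter, Finset.mem_univ, true_and]
      exact Or.inl hjm
    · push_neg at hcase
      have hle : ∀ j ∈ T i, m j ≤ r - 1 := fun j hj => by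
        have := hcase j hj; omega
      have hsum_le : ∑ j ∈ T i, m j ≤ (T i).card * (r - 1) := by
        calc ∑ j ∈ T i, m j ≤ ∑ j ∈ T i, (r - 1) := Finset.sum_le_sum hle
          _ = (T i).card * (r - 1) := by rw [Finset.sum_const, smul_eq_mul]
      have hcard : (T i).card = h := by
        have h1 := hm i
        have h2 := hT i
        have hr1 : 1 ≤ r - 1 := by omega
        nlinarith [hsum_le]
      have heq : ∑ j ∈ T i, m j = ∑ j ∈ T i, (r - 1) := by
        have h1 := hm i
        rw [hcard] at hsum_le
        rw [Finset.sum_const, smul_eq_mul, hcard]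
        have hmc : (r - 1) * h = h * (r - 1) := Nat.mul_comm _ _
        omega
      have hall : ∀ j ∈ T i, m j = r - 1 :=
        (Finset.sum_eq_sum_iff_of_le hle).mp heq
      have h2card : 1 < (T i).card := by omega
      obtain ⟨j₁, hj₁, j₂, hj₂, hne⟩ := Finset.one_lt_card.mp h2card
      by_cases hk : (j₁ : ℕ) = k
      · refine ⟨j₂, hj₂, ?_⟩
        rw [hS]
        simp only [Finset.mem_filter, Finset.mem_univ, true_and]
        exact Or.inr ⟨hall j₂ hj₂, fun hk2 => hne (Fin.ext (by omega))⟩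
      · refine ⟨j₁, hj₁, ?_⟩
        rw [hS]
        simp only [Finset.mem_filter, Finset.mem_univ, true_and]
        exact Or.inr ⟨hall j₁ hj₁, hk⟩
  -- each monomial (c k) 1 is in the intersection
  have hmem : ∀ k, (monomial (c k) (1 : K)) ∈
      (⨅ i : Fin p, Ideal.span ((fun j => (MvPolynomial.X j : MvPolynomial (Fin n) K)) ''
          (T i : Set (Fin n)))) := by
    intro k
    rw [Ideal.mem_iInf]
    intro i
    obtain ⟨j, hjT, hjS⟩ := hSi i k
    have hsplit : c k = Finsupp.single j 1 + ∑ j' ∈ (S k).erase j, Finsupp.single j' 1 := by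
      rw [hc]
      exact (Finset.add_sum_erase _ _ hjS).symm
    have : (monomial (c k) (1 : K)) =
        (MvPolynomial.X j) * monomial (∑ j' ∈ (S k).erase j, Finsupp.single j' 1) 1 := by
      rw [MvPolynomial.X, monomial_mul, one_mul, hsplit]
    rw [this]
    exact Ideal.mul_mem_right _ _ (Ideal.subset_span ⟨j, hjT, rfl⟩)
  -- assemble
  have hfact : (monomial m (1 : K)) =
      (∏ k ∈ Finset.range r, (monomial (c k) (1 : K))) * monomial (m - b) 1 := by
    rw [prod_monomial, ← hb, monomial_mul, one_mul, add_tsub_cancel_of_le hbm]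
  rw [hfact]
  exact Ideal.mul_mem_right _ _ (prod_mem_pow _ _ r fun k _ => hmem k)

end Stmt8Aux

/-- If `I = ⋂ Qᵢ` is a squarefree monomial ideal in `n ≥ 2` variables with big height
`h ≥ 2` (each monomial prime `Qᵢ` generated by at most `h` variables, some by exactly `h`),
then `I^{(rh-h)} = ⋂ Qᵢ^{rh-h} ⊆ I^r` for all `r ≥ n`. -/
theorem stmt8 {K : Type*} [Field K] {n : ℕ} (hn : 2 ≤ n)
    (h : ℕ) (hh : 2 ≤ h) (p : ℕ)
    (T : Fin p → Finset (Fin n))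
    (hT : ∀ i, (T i).card ≤ h) (hT' : ∃ i, (T i).card = h)
    (r : ℕ) (hr : n ≤ r) :
    (⨅ i : Fin p,
        (Ideal.span ((fun j => (MvPolynomial.X j : MvPolynomial (Fin n) K)) ''
          (T i : Set (Fin n)))) ^ (r * h - h)) ≤
      (⨅ i : Fin p,
        Ideal.span ((fun j => (MvPolynomial.X j : MvPolynomial (Fin n) K)) ''
          (T i : Set (Fin n)))) ^ r := by
  intro f hf
  rw [Ideal.mem_iInf] at hf
  have hdeg : ∀ i, ∀ m ∈ f.support, r * h - h ≤ ∑ j ∈ T i, m j := by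
    intro i m hm
    exact Stmt8Aux.pow_le_J (T i) (r * h - h) (hf i) m hm
  rw [f.as_sum]
  apply Ideal.sum_mem
  intro m hm
  have hCm : (monomial m (coeff m f)) = C (coeff m f) * monomial m (1 : K) := by
    rw [C_mul_monomial, mul_one]
  rw [hCm]
  refine Ideal.mul_mem_left _ _ ?_
  apply Stmt8Aux.key h hh T hT r hr (le_trans hn hr) m
  intro i
  have := hdeg i m hm
  have hrw : (r - 1) * h = r * h - h := by
    rw [Nat.sub_one_mul]
  omega
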